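/- If φ is an automorphism of a finite tree T whose fixed vertex set is exactly {v₀}, then every automorphism of T fixes v₀; i.e., Aut(T) equals the stabilizer Γ_{v₀} of v₀. -/

import Mathlib

open SimpleGraph

section Aux

variable {V : Type*} [DecidableEq V] {G : SimpleGraph V}

/-- In a tree, any path realizes the distance. -/
private lemma tree_path_length_eq_dist (hT : G.IsTree) {u v : V} {p : G.Walk u v}
    (hp : p.IsPath) : p.length = G.dist u v := by
  obtain ⟨q, hq⟩ := hT.isConnected.exists_walk_length_eq_dist u v
  have huniq : (⟨p, hp⟩ : G.Path u v) = ⟨q.bypass, q.bypass_isPath⟩ :=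
    hT.IsAcyclic.path_unique _ _
  have h1 : p.length = q.bypass.length := by
    have := congrArg (fun r : G.Path u v => r.1.length) huniq
    simpa using this
  have h2 : q.bypass.length ≤ q.length := q.length_bypass_le
  have h3 : G.dist u v ≤ p.length := SimpleGraph.dist_le p
  omega

/-- In a tree, if `m` lies on a path from `u` to `v`, distances add. -/
private lemma tree_dist_add_of_mem (hT : G.IsTree) {u v m : V} {p : G.Walk u v}
    (hp : p.IsPath) (hm : m ∈ p.support) :
    G.dist u v = G.dist u m + G.dist m v := by
  have h1 : (p.takeUntil m hm).length = G.dist u m :=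
    tree_path_length_eq_dist hT (hp.takeUntil hm)
  have h2 : (p.dropUntil m hm).length = G.dist m v :=
    tree_path_length_eq_dist hT (hp.dropUntil hm)
  have h3 : (p.takeUntil m hm).length + (p.dropUntil m hm).length = p.length := by
    rw [← SimpleGraph.Walk.length_append, p.take_spec hm]
  have h4 : p.length = G.dist u v := tree_path_length_eq_dist hT hp
  omega

/-- In a tree, a vertex on the (unique) path from `a` to `b` lies on any
broken path `a → u → b`. -/
private lemma tree_mem_or_mem (hT : G.IsTree) {a b m : V} {p : G.Walk a b}
    (hp : p.IsPath) (hm : m ∈ p.support) (r₁ : G.Walk a u) (r₂ : G.Walk u b) :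
    m ∈ r₁.support ∨ m ∈ r₂.support := by
  have huniq : (⟨p, hp⟩ : G.Path a b)
      = ⟨(r₁.append r₂).bypass, (r₁.append r₂).bypass_isPath⟩ :=
    hT.IsAcyclic.path_unique _ _
  have hps : p = (r₁.append r₂).bypass := congrArg Subtype.val huniq
  rw [hps] at hm
  have := (r₁.append r₂).support_bypass_subset hm
  rwa [SimpleGraph.Walk.mem_support_append_iff] at this

/-- In a tree, the distances from any vertex to two adjacent vertices differ
by exactly one. -/
private lemma tree_adj_dist (hT : G.IsTree) {a b : V} (hab : G.Adj a b) (u : V) :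
    G.dist u b = G.dist u a + 1 ∨ G.dist u a = G.dist u b + 1 := by
  obtain ⟨w, hw⟩ := hT.isConnected.exists_walk_length_eq_dist u a
  set p := w.bypass with hpdef
  have hp : p.IsPath := w.bypass_isPath
  have hlen : p.length = G.dist u a := tree_path_length_eq_dist hT hp
  by_cases hb : b ∈ p.support
  · right
    have := tree_dist_add_of_mem hT hp hb
    have hba : G.dist b a = 1 := SimpleGraph.dist_eq_one_iff_adj.mpr hab.symm
    omega
  · left
    have hq : (p.concat hab).IsPath := by
      rw [SimpleGraph.Walk.isPath_def, SimpleGraph.Walk.support_concat,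
        List.nodup_append]
      refine ⟨hp.support_nodup, List.nodup_singleton b, ?_⟩
      intro x hx y hx' hxy
      simp only [List.mem_singleton] at hx'
      exact hb (hx' ▸ hxy ▸ hx)
    have := tree_path_length_eq_dist hT hq
    rw [SimpleGraph.Walk.length_concat, hlen] at this
    omega

/-- Graph isomorphisms preserve distance. -/
private lemma iso_dist_le (h : G.Connected) (ψ : G ≃g G) (u v : V) :
    G.dist (ψ u) (ψ v) ≤ G.dist u v := by
  obtain ⟨p, hp⟩ := h.exists_walk_length_eq_dist u v
  calc G.dist (ψ u) (ψ v) ≤ (p.map ψ.toHom).length := SimpleGraph.dist_le _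
    _ = G.dist u v := by rw [SimpleGraph.Walk.length_map, hp]

private lemma iso_dist (h : G.Connected) (ψ : G ≃g G) (u v : V) :
    G.dist (ψ u) (ψ v) = G.dist u v := by
  refine le_antisymm (iso_dist_le h ψ u v) ?_
  have := iso_dist_le h ψ.symm (ψ u) (ψ v)
  simpa using this

end Aux

/-- If some automorphism of a finite tree has fixed vertex set exactly `{v₀}`,
then every automorphism fixes `v₀`: `Aut(T)` equals the stabilizer of `v₀`. -/
theorem tree_aut_all_fix_common_vertex
    {V : Type*} [Fintype V] (G : SimpleGraph V) (hT : G.IsTree)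
    (φ : G ≃g G) (v₀ : V) (hfix : ∀ v : V, φ v = v ↔ v = v₀) :
    ∀ ψ : G ≃g G, ψ v₀ = v₀ := by
  classical
  have hconn := hT.isConnected
  -- eccentricity
  set ecc : V → ℕ := fun v => Finset.univ.sup (fun u => G.dist v u) with hecc
  have hecc_le : ∀ v u : V, G.dist v u ≤ ecc v := fun v u =>
    Finset.le_sup (Finset.mem_univ u)
  have hecc_exists : ∀ v : V, ∃ u : V, ecc v = G.dist v u := by
    intro v
    obtain ⟨u, _, hu⟩ := Finset.exists_mem_eq_sup Finset.univ
      ⟨v, Finset.mem_univ v⟩ (fun u => G.dist v u)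
    exact ⟨u, hu⟩
  -- eccentricity is invariant under automorphisms
  have hecc_iso : ∀ (ψ : G ≃g G) (v : V), ecc (ψ v) = ecc v := by
    intro ψ v
    have himg : (Finset.univ : Finset V) = Finset.univ.image ψ :=
      (Finset.image_univ_of_surjective ψ.toEquiv.surjective).symm
    rw [hecc]
    simp only
    conv_lhs => rw [himg, Finset.sup_image]
    apply Finset.sup_congr rfl
    intro u _
    exact iso_dist hconn ψ v u
  -- a vertex of minimal eccentricity
  obtain ⟨c, _, hc⟩ := Finset.exists_min_image Finset.univ ecc
    ⟨v₀, Finset.mem_univ v₀⟩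
  have hcmin : ∀ x : V, ecc c ≤ ecc x := fun x => hc x (Finset.mem_univ x)
  -- any two distinct vertices of minimal eccentricity are adjacent
  have hadj : ∀ a b : V, ecc a = ecc c → ecc b = ecc c → a ≠ b → G.Adj a b := by
    intro a b ha hb hne
    have hd0 : 0 < G.dist a b := hconn.pos_dist_of_ne hne
    rcases Nat.lt_or_ge (G.dist a b) 2 with h2 | h2
    · have : G.dist a b = 1 := by omega
      exact SimpleGraph.dist_eq_one_iff_adj.mp this
    · exfalso
      -- take the unique path from a to b; it has an interior vertex m
      obtain ⟨w, hw⟩ := hconn.exists_walk_length_eq_dist a b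
      have hp : w.bypass.IsPath := w.bypass_isPath
      have hlen : w.bypass.length = G.dist a b := tree_path_length_eq_dist hT hp
      -- destructure the path to get its second vertex
      rcases hq : w.bypass with _ | ⟨hadj', q⟩
      · rw [hq] at hlen; simp at hlen; simp_all
      rename_i m
      rw [hq] at hp hlen
      have hqpath : q.IsPath := hp.of_cons
      have hanotin : a ∉ q.support := (SimpleGraph.Walk.cons_isPath_iff _ _).mp hp |>.2
      have hma : m ≠ a := fun h => hanotin (h ▸ q.start_mem_support)
      have hqlen : q.length = G.dist m b := tree_path_length_eq_dist hT hqpath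
      have hmb : 1 ≤ G.dist m b := by
        simp only [SimpleGraph.Walk.length_cons] at hlen; omega
      have ham : 1 ≤ G.dist a m := hconn.pos_dist_of_ne (Ne.symm hma)
      have hm : m ∈ (SimpleGraph.Walk.cons hadj' q).support := by
        simp [SimpleGraph.Walk.support_cons]
      -- split distances at m
      have hsplit : ∀ u : V, G.dist a u = G.dist a m + G.dist m u ∨
          G.dist u b = G.dist u m + G.dist m b := by
        intro u
        obtain ⟨r₁, hr₁⟩ := hconn.exists_walk_length_eq_dist a u
        obtain ⟨r₂, hr₂⟩ := hconn.exists_walk_length_eq_dist u b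
        rcases tree_mem_or_mem hT hp hm r₁.bypass r₂.bypass with h | h
        · exact Or.inl (tree_dist_add_of_mem hT r₁.bypass_isPath h)
        · exact Or.inr (tree_dist_add_of_mem hT r₂.bypass_isPath h)
      -- u realizing the eccentricity of m
      obtain ⟨u, hu⟩ := hecc_exists m
      have hmiddle : ecc m < ecc c := by
        rcases hsplit u with h | h
        · have h1 : G.dist a u ≤ ecc a := hecc_le a u
          have h2 : ecc m = G.dist m u := hu
          omega
        · have h1 : G.dist b u ≤ ecc b := hecc_le b u
          have h2 : ecc m = G.dist m u := hu
          have h3 : G.dist b u = G.dist u b := SimpleGraph.dist_comm ..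
          have h4 : G.dist u m = G.dist m u := SimpleGraph.dist_comm ..
          omega
      exact absurd (hcmin m) (by omega)
  -- every vertex of minimal eccentricity equals v₀
  have hcen : ∀ x : V, ecc x = ecc c → x = v₀ := by
    intro x hx
    by_contra hne
    have hφx : φ x ≠ x := fun h => hne ((hfix x).mp h)
    have hφxecc : ecc (φ x) = ecc c := by rw [hecc_iso φ x, hx]
    have hxφx : G.Adj x (φ x) := hadj x (φ x) hx hφxecc (Ne.symm hφx)
    -- distances from v₀ to x and φ x agree, contradicting adjacency
    have hv₀fix : φ v₀ = v₀ := (hfix v₀).mpr rfl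
    have heq : G.dist v₀ (φ x) = G.dist v₀ x := by
      conv_rhs => rw [← iso_dist hconn φ v₀ x, hv₀fix]
    rcases tree_adj_dist hT hxφx v₀ with h | h <;> omega
  have hv₀c : c = v₀ := hcen c rfl
  intro ψ
  apply hcen
  rw [← hv₀c] at *
  rw [hecc_iso ψ c]
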